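/- For any real positive-definite 2n×2n covariance matrix Γ with symplectic eigenvalues ν₁,…,νₙ (each counted once), the Gaussian extractable work W(Γ) = (1/2)(Tr[Γ] − 2∑ᵢνᵢ) is nonnegative; i.e., the trace of Γ is at least twice the sum of its symplectic eigenvalues. -/

import Mathlib

open Matrix Polynomial

set_option maxHeartbeats 1000000

/-- Similar matrices have the same characteristic polynomial. -/
lemma charpoly_conj_aux {m R : Type*} [Fintype m] [DecidableEq m] [CommRing R]
    (P A Q : Matrix m m R) (h1 : P * Q = 1) :
    (P * A * Q).charpoly = A.charpoly := by
  let f : Matrix m m R →+* Matrix m m R[X] := (Polynomial.C : R →+* R[X]).mapMatrix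
  have hscal : ∀ M : Matrix m m R[X], M * Matrix.scalar m (X : R[X])
      = Matrix.scalar m (X : R[X]) * M := by
    intro M
    ext i j
    simp [Matrix.scalar_apply, Matrix.mul_apply, Matrix.diagonal_apply, mul_comm]
  have hfPQ : f P * f Q = 1 := by rw [← _root_.map_mul, h1, _root_.map_one]
  have hcm : charmatrix (P * A * Q) = f P * charmatrix A * f Q := by
    unfold charmatrix
    rw [_root_.map_mul, _root_.map_mul, mul_sub, sub_mul]
    congr 1
    rw [mul_assoc, ← hscal (f Q), ← mul_assoc, hfPQ, one_mul]
  unfold Matrix.charpoly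
  rw [hcm, det_mul, det_mul, mul_right_comm, ← det_mul, hfPQ, det_one, one_mul]

lemma roots_charpoly_diagonal {m : Type*} [Fintype m] [DecidableEq m] (d : m → ℂ) :
    (Matrix.diagonal d).charpoly.roots = Finset.univ.val.map d := by
  have h : (Matrix.diagonal d).charpoly = ∏ i, (X - Polynomial.C (d i)) := by
    unfold Matrix.charpoly
    have : charmatrix (Matrix.diagonal d) = Matrix.diagonal fun i => X - Polynomial.C (d i) := by
      ext i j
      rcases eq_or_ne i j with rfl | h
      · simp
      · simp [h]
    rw [this, det_diagonal]
  rw [h, Finset.prod_eq_multiset_prod, ← Polynomial.roots_multiset_prod_X_sub_C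
    (Finset.univ.val.map d), Multiset.map_map]
  rfl

/-- diagonal entry of `star U * M * U` as a quadratic form in the `k`-th column of `U`. -/
lemma conj_diag_entry {m : Type*} [Fintype m] (M U : Matrix m m ℂ) (k : m) :
    (star U * M * U) k k = star (fun j => U j k) ⬝ᵥ (M *ᵥ fun j => U j k) := by
  simp only [Matrix.mul_apply, Matrix.mulVec, dotProduct, Matrix.star_apply,
    Pi.star_apply, Finset.sum_mul, Finset.mul_sum]
  rw [Finset.sum_comm]
  exact Finset.sum_congr rfl fun l _ => Finset.sum_congr rfl fun j _ => by ring

lemma dot_self_mulVec {m : Type*} [Fintype m] (S : Matrix m m ℂ) (u : m → ℂ) :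
    star (S *ᵥ u) ⬝ᵥ (S *ᵥ u) = star u ⬝ᵥ ((Sᴴ * S) *ᵥ u) := by
  rw [star_mulVec, ← Matrix.dotProduct_mulVec, Matrix.mulVec_mulVec]

lemma sandwich_dot {m : Type*} [Fintype m] (S M : Matrix m m ℂ) (hS : Sᴴ = S) (u : m → ℂ) :
    star u ⬝ᵥ ((S * M * S) *ᵥ u) = star (S *ᵥ u) ⬝ᵥ (M *ᵥ (S *ᵥ u)) := by
  rw [star_mulVec, hS, ← Matrix.dotProduct_mulVec]
  simp only [Matrix.mulVec_mulVec]
  rw [mul_assoc]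

/-- Cauchy-Schwarz-type bound for an "isometric" matrix `B` (with `Bᴴ * B = 1`). -/
lemma abs_dot_le_of_isometry {m : Type*} [Fintype m] [DecidableEq m] (B : Matrix m m ℂ)
    (hB : Bᴴ * B = 1) (w : m → ℂ) :
    ‖star w ⬝ᵥ (B *ᵥ w)‖ ≤ (star w ⬝ᵥ w).re := by
  let x : EuclideanSpace ℂ m := (WithLp.equiv 2 (m → ℂ)).symm w
  let y : EuclideanSpace ℂ m := (WithLp.equiv 2 (m → ℂ)).symm (B *ᵥ w)
  have hx : (inner ℂ x y : ℂ) = star w ⬝ᵥ (B *ᵥ w) := by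
    rw [EuclideanSpace.inner_eq_star_dotProduct]
    simp [x, y]
    exact dotProduct_comm _ _
  have hxx : (inner ℂ x x : ℂ) = star w ⬝ᵥ w := by
    rw [EuclideanSpace.inner_eq_star_dotProduct]
    simp [x]
    exact dotProduct_comm _ _
  have hyy : (inner ℂ y y : ℂ) = (inner ℂ x x : ℂ) := by
    rw [EuclideanSpace.inner_eq_star_dotProduct, hxx]
    simp only [y, Equiv.apply_symm_apply]
    change (B *ᵥ w) ⬝ᵥ star (B *ᵥ w) = star w ⬝ᵥ w
    rw [dotProduct_comm]
    rw [star_mulVec, ← Matrix.dotProduct_mulVec, Matrix.mulVec_mulVec, hB, Matrix.one_mulVec]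
  have hnorm : ‖y‖ = ‖x‖ := by
    have h1 : ‖y‖ ^ 2 = ‖x‖ ^ 2 := by
      rw [← inner_self_eq_norm_sq (𝕜 := ℂ), ← inner_self_eq_norm_sq (𝕜 := ℂ), hyy]
    nlinarith [norm_nonneg x, norm_nonneg y]
  calc ‖star w ⬝ᵥ (B *ᵥ w)‖ = ‖(inner ℂ x y : ℂ)‖ := by
        rw [hx]
    _ ≤ ‖x‖ * ‖y‖ := norm_inner_le_norm x y
    _ = ‖x‖ ^ 2 := by rw [hnorm]; ring
    _ = (star w ⬝ᵥ w).re := by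
        rw [← inner_self_eq_norm_sq (𝕜 := ℂ), hxx, RCLike.re_to_complex]


/-- The standard symplectic form Ω = [[0, Iₙ],[−Iₙ, 0]] on ℝ^{2n}. -/
noncomputable def Omega (n : ℕ) : Matrix (Fin n ⊕ Fin n) (Fin n ⊕ Fin n) ℝ :=
  Matrix.fromBlocks 0 1 (-1) 0

/-- For any real positive-definite 2n×2n covariance matrix Γ with
symplectic eigenvalues ν₁,…,νₙ (i.e. the eigenvalues of iΩΓ, with multiplicity,
are ±ν₁,…,±νₙ), the Gaussian extractable work (1/2)(Tr Γ − 2∑ν) is nonnegative. -/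
theorem gaussian_work_nonneg (n : ℕ)
    (Γ : Matrix (Fin n ⊕ Fin n) (Fin n ⊕ Fin n) ℝ)
    (hsym : Γ.IsHermitian) (hpd : Γ.PosDef)
    (ν : Fin n → ℝ) (hν : ∀ i, 0 < ν i)
    (hroots : ((Complex.I • ((Omega n * Γ).map (fun x : ℝ => (x : ℂ)))).charpoly).roots
      = (Finset.univ.val.map fun i : Fin n => ((ν i : ℝ) : ℂ))
        + (Finset.univ.val.map fun i : Fin n => (-(ν i : ℝ) : ℂ))) :
    0 ≤ (1 / 2 : ℝ) * (Γ.trace - 2 * ∑ i, ν i) := by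
  classical
  have key : 2 * ∑ i, ν i ≤ Γ.trace := by
    -- real square root of Γ
    obtain ⟨R, hRR, hRsym⟩ : ∃ R : Matrix (Fin n ⊕ Fin n) (Fin n ⊕ Fin n) ℝ,
        R * R = Γ ∧ Rᴴ = R :=
      open scoped MatrixOrder in ⟨CFC.sqrt Γ, CFC.sqrt_mul_sqrt_self Γ hpd.posSemidef.nonneg,
        (CFC.sqrt_nonneg Γ).posSemidef.1⟩
    -- complexification
    let cmap : Matrix (Fin n ⊕ Fin n) (Fin n ⊕ Fin n) ℝ →
        Matrix (Fin n ⊕ Fin n) (Fin n ⊕ Fin n) ℂ := fun A => A.map (fun x : ℝ => (x : ℂ))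
    have cmap_mul : ∀ A B, cmap (A * B) = cmap A * cmap B := fun A B =>
      Matrix.map_mul (L := A) (M := B) (f := Complex.ofRealHom)
    have cmap_ct : ∀ A, (cmap A)ᴴ = cmap Aᵀ := by
      intro A; ext i j
      simp [cmap, Matrix.conjTranspose_apply, Complex.conj_ofReal]
    have cmap_det : ∀ A, (cmap A).det = (A.det : ℂ) := fun A =>
      (RingHom.map_det Complex.ofRealHom A).symm
    set S : Matrix (Fin n ⊕ Fin n) (Fin n ⊕ Fin n) ℂ := cmap R with hSdef
    set Γc : Matrix (Fin n ⊕ Fin n) (Fin n ⊕ Fin n) ℂ := cmap Γ with hΓcdef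
    set Ωc : Matrix (Fin n ⊕ Fin n) (Fin n ⊕ Fin n) ℂ := cmap (Omega n) with hΩcdef
    have hSS : S * S = Γc := by rw [hSdef, ← cmap_mul, hRR]
    have hSH : Sᴴ = S := by
      rw [hSdef, cmap_ct]
      have : Rᵀ = R := hRsym
      rw [this]
    have hdetS : IsUnit S.det := by
      rw [hSdef, cmap_det]
      have hΓdet : (0 : ℝ) < Γ.det := hpd.det_pos
      have hRdet : R.det ≠ 0 := by
        intro h
        rw [← hRR, det_mul, h, mul_zero] at hΓdet
        exact lt_irrefl _ hΓdet
      simpa using hRdet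
    -- Ω facts
    have hΩT : (Omega n)ᵀ = -(Omega n) := by
      show (Matrix.fromBlocks (0 : Matrix (Fin n) (Fin n) ℝ) 1 (-1) 0)ᵀ = _
      rw [Matrix.fromBlocks_transpose, Omega, Matrix.fromBlocks_neg]
      simp
    have hΩ2 : Omega n * Omega n = -1 := by
      show Matrix.fromBlocks (0 : Matrix (Fin n) (Fin n) ℝ) 1 (-1) 0 *
        Matrix.fromBlocks 0 1 (-1) 0 = -1
      rw [Matrix.fromBlocks_multiply]
      have h1 : (-1 : Matrix (Fin n ⊕ Fin n) (Fin n ⊕ Fin n) ℝ)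
          = Matrix.fromBlocks (-1) 0 0 (-1) := by
        rw [← Matrix.fromBlocks_one, Matrix.fromBlocks_neg]
        simp
      rw [h1]
      congr 1 <;> simp
    have cmap_neg : ∀ A, cmap (-A) = -cmap A := by
      intro A; ext i j; simp [cmap]
    have hΩcH : Ωcᴴ = -Ωc := by rw [hΩcdef, cmap_ct, hΩT, cmap_neg]
    have hΩc2 : Ωc * Ωc = -1 := by
      rw [hΩcdef, ← cmap_mul, hΩ2]
      ext i j
      rcases eq_or_ne i j with rfl | h
      · simp [cmap]
      · simp [cmap, Matrix.one_apply_ne h]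
    -- B and H
    set B : Matrix (Fin n ⊕ Fin n) (Fin n ⊕ Fin n) ℂ := Complex.I • Ωc with hBdef
    set H : Matrix (Fin n ⊕ Fin n) (Fin n ⊕ Fin n) ℂ := S * B * S with hHdef
    have hBH : Bᴴ = B := by
      rw [hBdef, Matrix.conjTranspose_smul, hΩcH]
      simp [Complex.star_def, Complex.conj_I]
    have hB2 : B * B = 1 := by
      rw [hBdef, Matrix.smul_mul, Matrix.mul_smul, smul_smul, Complex.I_mul_I, hΩc2]
      simp
    have hBHB : Bᴴ * B = 1 := by rw [hBH, hB2]
    have hHHerm : H.IsHermitian := by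
      show Hᴴ = H
      rw [hHdef, Matrix.conjTranspose_mul, Matrix.conjTranspose_mul, hSH, hBH, mul_assoc]
    -- similarity: H has the same charpoly as I • (Ω Γ)
    have hSinv : S * S⁻¹ = 1 := Matrix.mul_nonsing_inv S hdetS
    have hchar : H.charpoly
        = (Complex.I • ((Omega n * Γ).map (fun x : ℝ => (x : ℂ)))).charpoly := by
      have hmap : (Omega n * Γ).map (fun x : ℝ => (x : ℂ)) = Ωc * Γc := cmap_mul _ _
      have hsim : S * (Complex.I • (Ωc * Γc)) * S⁻¹ = H := by
        rw [Matrix.mul_smul, Matrix.smul_mul, ← hSS]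
        rw [hHdef, hBdef, Matrix.mul_smul, Matrix.smul_mul]
        congr 1
        calc S * (Ωc * (S * S)) * S⁻¹ = S * Ωc * S * (S * S⁻¹) := by
              simp only [mul_assoc]
          _ = S * Ωc * S := by rw [hSinv, mul_one]
      rw [hmap, ← hsim, charpoly_conj_aux _ _ _ hSinv]
    -- spectral data, made opaque
    obtain ⟨U, e, hU1, hspec⟩ : ∃ (U : Matrix (Fin n ⊕ Fin n) (Fin n ⊕ Fin n) ℂ)
        (e : (Fin n ⊕ Fin n) → ℝ), U * star U = 1 ∧
        star U * H * U = Matrix.diagonal (fun k => ((e k : ℝ) : ℂ)) :=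
      ⟨hHHerm.eigenvectorUnitary, hHHerm.eigenvalues,
        Matrix.mem_unitaryGroup_iff.mp hHHerm.eigenvectorUnitary.2,
        (Unitary.conjStarAlgAut_star_apply (S := ℂ) _ _).symm.trans
          hHHerm.conjStarAlgAut_star_eigenvectorUnitary⟩
    have hHdiag : H = U * Matrix.diagonal (fun k => ((e k : ℝ) : ℂ)) * star U := by
      rw [← hspec]
      calc H = (U * star U) * H * (U * star U) := by rw [hU1, one_mul, mul_one]
        _ = U * (star U * H * U) * star U := by simp only [mul_assoc]
    have hHroots : H.charpoly.roots
        = Finset.univ.val.map (fun k => ((e k : ℝ) : ℂ)) := by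
      conv_lhs => rw [hHdiag]
      rw [charpoly_conj_aux _ _ _ hU1, roots_charpoly_diagonal]
    -- multiset identity and abs sums
    have hmulti : Finset.univ.val.map (fun k => ((e k : ℝ) : ℂ))
        = (Finset.univ.val.map fun i : Fin n => ((ν i : ℝ) : ℂ))
          + (Finset.univ.val.map fun i : Fin n => (-(ν i : ℝ) : ℂ)) := by
      rw [← hHroots, hchar, hroots]
    have habs : ∑ k, |e k| = 2 * ∑ i, ν i := by
      have h := congrArg (fun s : Multiset ℂ => ((s.map (fun z : ℂ => ‖z‖)).sum : ℝ)) hmulti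
      simp only [Multiset.map_add, Multiset.sum_add, Multiset.map_map, Function.comp] at h
      rw [← Finset.sum_eq_multiset_sum, ← Finset.sum_eq_multiset_sum,
        ← Finset.sum_eq_multiset_sum] at h
      simp only [norm_neg, Complex.norm_real, Real.norm_eq_abs] at h
      have habs' : ∑ i : Fin n, |ν i| = ∑ i : Fin n, ν i :=
        Finset.sum_congr rfl fun i _ => abs_of_pos (hν i)
      rw [h, habs']
      ring
    -- per-eigenvalue bound
    have hkey : ∀ k, |e k|
        ≤ (star (fun j => U j k) ⬝ᵥ (Γc *ᵥ fun j => U j k)).re := by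
      intro k
      set u : (Fin n ⊕ Fin n) → ℂ := fun j => U j k with hudef
      set w : (Fin n ⊕ Fin n) → ℂ := S *ᵥ u with hwdef
      have hstarw : star w = star u ᵥ* S := by
        rw [hwdef, star_mulVec, hSH]
      have h1 : ((e k : ℝ) : ℂ) = star u ⬝ᵥ (H *ᵥ u) := by
        rw [← conj_diag_entry H U k, hspec]
        simp
      have h2 : star u ⬝ᵥ (H *ᵥ u) = star w ⬝ᵥ (B *ᵥ w) := by
        rw [hHdef, hwdef]
        exact sandwich_dot S B hSH u
      have h3 : star w ⬝ᵥ w = star u ⬝ᵥ (Γc *ᵥ u) := by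
        rw [hwdef, dot_self_mulVec, hSH, hSS]
      calc |e k| = ‖((e k : ℝ) : ℂ)‖ := by
            rw [Complex.norm_real, Real.norm_eq_abs]
        _ = ‖star w ⬝ᵥ (B *ᵥ w)‖ := by rw [h1, h2]
        _ ≤ (star w ⬝ᵥ w).re := abs_dot_le_of_isometry B hBHB w
        _ = (star u ⬝ᵥ (Γc *ᵥ u)).re := by rw [h3]
    -- trace identity
    have htrace : ∑ k, (star (fun j => U j k) ⬝ᵥ (Γc *ᵥ fun j => U j k)) = (Γ.trace : ℂ) := by
      have h1 : ∀ k, star (fun j => U j k) ⬝ᵥ (Γc *ᵥ fun j => U j k)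
          = (star U * Γc * U) k k := fun k => (conj_diag_entry Γc U k).symm
      rw [Finset.sum_congr rfl (fun k _ => h1 k)]
      have h2 : ∑ k, (star U * Γc * U) k k = (star U * Γc * U).trace := rfl
      rw [h2, Matrix.trace_mul_cycle, hU1, one_mul]
      simp [hΓcdef, cmap, Matrix.trace, Matrix.map_apply, Matrix.diag]
    -- conclude
    have hfinal : ∑ k, |e k| ≤ Γ.trace := by
      calc ∑ k, |e k|
          ≤ ∑ k, (star (fun j => U j k) ⬝ᵥ (Γc *ᵥ fun j => U j k)).re :=
            Finset.sum_le_sum fun k _ => hkey k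
        _ = (∑ k, (star (fun j => U j k) ⬝ᵥ (Γc *ᵥ fun j => U j k))).re := by
            rw [Complex.re_sum]
        _ = Γ.trace := by rw [htrace, Complex.ofReal_re]
    linarith [habs ▸ hfinal]
  linarith
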